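/- Every n×n positive definite symmetric quasi-Cartan matrix A is ℤ-equivalent to a symmetric quasi-Cartan matrix B all of whose off-diagonal entries lie in {−1, 0} (i.e., to a symmetric Cartan matrix). -/

import Mathlib

open Matrix

/-- `A` and `A'` are ℤ-equivalent: `A' = Mᵀ·A·M` for some `M` invertible over ℤ. -/
def ZEquiv {V : Type*} [Fintype V] [DecidableEq V] (A A' : Matrix V V ℤ) : Prop :=
  ∃ M N : Matrix V V ℤ, M * N = 1 ∧ N * M = 1 ∧ A' = Mᵀ * A * M

/-- `A` is positive definite: `xᵀ·A·x > 0` for every nonzero integer vector `x`. -/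
def PosDefInt {V : Type*} [Fintype V] (A : Matrix V V ℤ) : Prop :=
  ∀ x : V → ℤ, x ≠ 0 → 0 < x ⬝ᵥ (A *ᵥ x)

variable {n : ℕ}

lemma bilSymm {R : Type*} [CommRing R] {A : Matrix (Fin n) (Fin n) R} (hsym : A.IsSymm)
    (x y : Fin n → R) : x ⬝ᵥ (A *ᵥ y) = y ⬝ᵥ (A *ᵥ x) := by
  rw [Matrix.dotProduct_mulVec, ← Matrix.mulVec_transpose, hsym.eq, dotProduct_comm]

lemma qAdd {R : Type*} [CommRing R] {A : Matrix (Fin n) (Fin n) R} (hsym : A.IsSymm)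
    (x y : Fin n → R) : (x + y) ⬝ᵥ (A *ᵥ (x + y)) =
      x ⬝ᵥ (A *ᵥ x) + y ⬝ᵥ (A *ᵥ y) + 2 * (x ⬝ᵥ (A *ᵥ y)) := by
  rw [Matrix.mulVec_add, dotProduct_add, add_dotProduct, add_dotProduct, bilSymm hsym y x]
  ring

lemma qSub {R : Type*} [CommRing R] {A : Matrix (Fin n) (Fin n) R} (hsym : A.IsSymm)
    (x y : Fin n → R) : (x - y) ⬝ᵥ (A *ᵥ (x - y)) =
      x ⬝ᵥ (A *ᵥ x) + y ⬝ᵥ (A *ᵥ y) - 2 * (x ⬝ᵥ (A *ᵥ y)) := by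
  rw [Matrix.mulVec_sub, dotProduct_sub, sub_dotProduct, sub_dotProduct, bilSymm hsym y x]
  ring

lemma conjEntry {R : Type*} [CommRing R] (M W : Matrix (Fin n) (Fin n) R) (i j : Fin n) :
    (Wᵀ * M * W) i j = (W *ᵥ Pi.single i 1) ⬝ᵥ (M *ᵥ (W *ᵥ Pi.single j 1)) := by
  have h1 : ∀ (N : Matrix (Fin n) (Fin n) R) (i j : Fin n),
      N i j = Pi.single i (1:R) ⬝ᵥ (N *ᵥ Pi.single j 1) := by
    intro N i j
    simp [Matrix.mulVec_single, single_dotProduct]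
  rw [h1 (Wᵀ * M * W) i j, ← Matrix.mulVec_mulVec, ← Matrix.mulVec_mulVec,
    Matrix.dotProduct_mulVec, Matrix.vecMul_transpose]

variable {n : ℕ}

lemma castQuad {S : Type*} [CommRing S] (f : ℤ →+* S) (A : Matrix (Fin n) (Fin n) ℤ)
    (x : Fin n → ℤ) : f (x ⬝ᵥ (A *ᵥ x)) = (f ∘ x) ⬝ᵥ (A.map f *ᵥ (f ∘ x)) := by
  rw [RingHom.map_dotProduct]
  congr 1
  funext i
  exact RingHom.map_mulVec f A x i

lemma posQ {A : Matrix (Fin n) (Fin n) ℤ} (hpos : PosDefInt A) :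
    ∀ x : Fin n → ℚ, x ≠ 0 → 0 < x ⬝ᵥ (A.map ((↑) : ℤ → ℚ) *ᵥ x) := by
  intro x hx
  set d : ℕ := ∏ i, (x i).den with hd
  have hd0 : 0 < (d : ℚ) := by
    have : 0 < d := Finset.prod_pos (fun i _ => (x i).pos)
    exact_mod_cast this
  have key : ∀ i, ∃ z : ℤ, (z : ℚ) = x i * d := by
    intro i
    obtain ⟨e, he⟩ := Finset.dvd_prod_of_mem (fun i => (x i).den) (Finset.mem_univ i)
    refine ⟨(x i).num * e, ?_⟩
    rw [hd, he]
    push_cast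
    rw [← mul_assoc, Rat.mul_den_eq_num]
  choose z hz using key
  have hzne : z ≠ 0 := by
    intro h0
    apply hx
    funext i
    have := hz i
    rw [h0] at this
    simp only [Pi.zero_apply, Int.cast_zero] at this
    have := this.symm
    rcases mul_eq_zero.mp this with h | h
    · exact h
    · exact absurd h (ne_of_gt hd0)
  have hp := hpos z hzne
  have hcast : (0:ℚ) < ((z ⬝ᵥ (A *ᵥ z) : ℤ) : ℚ) := by exact_mod_cast hp
  rw [show ((z ⬝ᵥ (A *ᵥ z) : ℤ) : ℚ) = (Int.castRingHom ℚ) (z ⬝ᵥ (A *ᵥ z)) from rfl,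
    castQuad] at hcast
  have hzq : (Int.castRingHom ℚ) ∘ z = fun i => x i * d := funext fun i => hz i
  rw [hzq] at hcast
  have hsm : (fun i => x i * (d:ℚ)) = (d:ℚ) • x := by
    funext i; simp [mul_comm]
  rw [hsm, Matrix.mulVec_smul, dotProduct_smul, smul_dotProduct] at hcast
  have : (0:ℚ) < (d:ℚ) * ((d:ℚ) * (x ⬝ᵥ (A.map ((↑) : ℤ → ℚ) *ᵥ x))) := by
    simpa [smul_eq_mul] using hcast
  by_contra hcon
  push_neg at hcon
  have h1 : (d:ℚ) * (x ⬝ᵥ (A.map ((↑) : ℤ → ℚ) *ᵥ x)) ≤ 0 :=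
    mul_nonpos_of_nonneg_of_nonpos hd0.le hcon
  have h2 : (d:ℚ) * ((d:ℚ) * (x ⬝ᵥ (A.map ((↑) : ℤ → ℚ) *ᵥ x))) ≤ 0 :=
    mul_nonpos_of_nonneg_of_nonpos hd0.le h1
  linarith

lemma detA_ne {A : Matrix (Fin n) (Fin n) ℤ} (hpos : PosDefInt A) : A.det ≠ 0 := by
  intro h0
  have hdq : (A.map ((↑) : ℤ → ℚ)).det = 0 := by
    have hmd := RingHom.map_det (Int.castRingHom ℚ) A
    rw [RingHom.mapMatrix_apply] at hmd
    simp only [Int.coe_castRingHom] at hmd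
    rw [← hmd, h0]
    norm_num
  obtain ⟨v, hv, hAv⟩ := (Matrix.exists_mulVec_eq_zero_iff).mpr hdq
  have := posQ hpos v hv
  rw [hAv, dotProduct_zero] at this
  exact lt_irrefl 0 this

lemma posR0 {A : Matrix (Fin n) (Fin n) ℤ} (hpos : PosDefInt A) :
    ∀ x : Fin n → ℝ, 0 ≤ x ⬝ᵥ (A.map ((↑) : ℤ → ℝ) *ᵥ x) := by
  have hcont : Continuous fun x : Fin n → ℝ => x ⬝ᵥ (A.map ((↑) : ℤ → ℝ) *ᵥ x) :=
    continuous_id.dotProduct (continuous_const.matrix_mulVec continuous_id)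
  have hS : Dense (Set.pi Set.univ (fun _ : Fin n => Set.range ((↑) : ℚ → ℝ))) :=
    dense_pi _ (fun i _ => Rat.denseRange_cast)
  have hclosed : IsClosed {x : Fin n → ℝ | 0 ≤ x ⬝ᵥ (A.map ((↑) : ℤ → ℝ) *ᵥ x)} :=
    isClosed_le continuous_const hcont
  have hsub : (Set.pi Set.univ (fun _ : Fin n => Set.range ((↑) : ℚ → ℝ))) ⊆
      {x : Fin n → ℝ | 0 ≤ x ⬝ᵥ (A.map ((↑) : ℤ → ℝ) *ᵥ x)} := by
    intro x hx
    have : ∀ i, ∃ q : ℚ, (q : ℝ) = x i := fun i => hx i (Set.mem_univ i)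
    choose q hq using this
    have hxq : x = (Rat.castHom ℝ) ∘ q := by funext i; simp [hq i]
    have hmap : (A.map ((↑) : ℤ → ℚ)).map (Rat.castHom ℝ) = A.map ((↑) : ℤ → ℝ) := by
      rw [Matrix.map_map]
      congr 1
    rcases eq_or_ne q 0 with h0 | h0
    · simp only [Set.mem_setOf_eq, hxq, h0]
      simp
    · have hq2 := posQ hpos q h0
      have : (0:ℝ) < (Rat.castHom ℝ) (q ⬝ᵥ (A.map ((↑) : ℤ → ℚ) *ᵥ q)) := by
        simpa using (by exact_mod_cast hq2 : (0:ℝ) < ((q ⬝ᵥ (A.map ((↑) : ℤ → ℚ) *ᵥ q) : ℚ) : ℝ))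
      rw [RingHom.map_dotProduct] at this
      have harg : (Rat.castHom ℝ) ∘ (A.map ((↑) : ℤ → ℚ) *ᵥ q)
          = A.map ((↑) : ℤ → ℝ) *ᵥ ((Rat.castHom ℝ) ∘ q) := by
        funext i
        rw [show ((Rat.castHom ℝ) ∘ (A.map ((↑) : ℤ → ℚ) *ᵥ q)) i
            = (Rat.castHom ℝ) ((A.map ((↑) : ℤ → ℚ) *ᵥ q) i) from rfl,
          RingHom.map_mulVec, hmap]
      rw [harg] at this
      simp only [Set.mem_setOf_eq, hxq]
      exact le_of_lt this
  have : Set.univ ⊆ {x : Fin n → ℝ | 0 ≤ x ⬝ᵥ (A.map ((↑) : ℤ → ℝ) *ᵥ x)} := by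
    rw [← hS.closure_eq]
    exact hclosed.closure_subset_iff.mpr hsub
  intro x
  exact this (Set.mem_univ x)

lemma posR {A : Matrix (Fin n) (Fin n) ℤ} (hsym : A.IsSymm) (hpos : PosDefInt A) :
    ∀ x : Fin n → ℝ, x ≠ 0 → 0 < x ⬝ᵥ (A.map ((↑) : ℤ → ℝ) *ᵥ x) := by
  set Ar := A.map ((↑) : ℤ → ℝ) with hAr
  have hsymR : Ar.IsSymm := by
    unfold Matrix.IsSymm
    rw [hAr, ← Matrix.transpose_map, hsym.eq]
  intro x hx
  rcases lt_or_eq_of_le (posR0 hpos x) with h | h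
  · exact h
  -- q x = 0 : derive contradiction
  exfalso
  have hb : ∀ y : Fin n → ℝ, x ⬝ᵥ (Ar *ᵥ y) = 0 := by
    intro y
    set b := x ⬝ᵥ (Ar *ᵥ y) with hbdef
    set qy := y ⬝ᵥ (Ar *ᵥ y) with hqy
    have key : ∀ t : ℝ, 0 ≤ qy * (t * t) + (2 * b) * t + 0 := by
      intro t
      have h1 := posR0 hpos (x + t • y)
      have hexp : (x + t • y) ⬝ᵥ (Ar *ᵥ (x + t • y)) =
          x ⬝ᵥ (Ar *ᵥ x) + t ^ 2 * qy + 2 * t * b := by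
        rw [qAdd hsymR x (t • y)]
        simp only [Matrix.mulVec_smul, dotProduct_smul, smul_dotProduct, smul_eq_mul]
        ring
      rw [hexp, ← h] at h1
      nlinarith [h1]
    have hd := discrim_le_zero key
    rw [discrim] at hd
    nlinarith [sq_nonneg b]
  have hAx : Ar *ᵥ x = 0 := by
    funext j
    have h1 := hb (Pi.single j 1)
    rw [Matrix.dotProduct_mulVec, ← Matrix.mulVec_transpose, hsymR.eq, dotProduct_single] at h1
    simpa using h1
  have hdet : Ar.det = 0 := Matrix.exists_mulVec_eq_zero_iff.mp ⟨x, hx, hAx⟩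
  have : ((A.det : ℤ) : ℝ) = 0 := by
    have hmd := RingHom.map_det (Int.castRingHom ℝ) A
    rw [RingHom.mapMatrix_apply] at hmd
    simp only [Int.coe_castRingHom] at hmd
    rw [← hmd] at hdet
    exact hdet
  exact detA_ne hpos (by exact_mod_cast this)

lemma intAbsLeSq (a : ℤ) : |a| ≤ a ^ 2 := by
  rcases eq_or_ne a 0 with rfl | h
  · simp
  · have h1 : 1 ≤ |a| := by
      have := abs_pos.mpr h
      omega
    nlinarith [sq_abs a, h1]

lemma lowerBound {A : Matrix (Fin n) (Fin n) ℤ} (hsym : A.IsSymm) (hpos : PosDefInt A)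
    (hn : 0 < n) : ∃ c : ℝ, 0 < c ∧
      ∀ x : Fin n → ℝ, c * ‖x‖ ^ 2 ≤ x ⬝ᵥ (A.map ((↑) : ℤ → ℝ) *ᵥ x) := by
  have : Nonempty (Fin n) := ⟨⟨0, hn⟩⟩
  set f := fun x : Fin n → ℝ => x ⬝ᵥ (A.map ((↑) : ℤ → ℝ) *ᵥ x) with hf
  have hcont : Continuous f :=
    continuous_id.dotProduct (continuous_const.matrix_mulVec continuous_id)
  have hne : (Metric.sphere (0 : Fin n → ℝ) 1).Nonempty := by
    refine ⟨fun _ => 1, ?_⟩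
    rw [mem_sphere_zero_iff_norm, pi_norm_const]
    norm_num
  obtain ⟨x₀, hx₀, hmin⟩ :=
    (isCompact_sphere (0 : Fin n → ℝ) 1).exists_isMinOn hne hcont.continuousOn
  have hx0norm : ‖x₀‖ = 1 := mem_sphere_zero_iff_norm.mp hx₀
  have hx0ne : x₀ ≠ 0 := by
    intro h; rw [h] at hx0norm; simp at hx0norm
  refine ⟨f x₀, posR hsym hpos x₀ hx0ne, ?_⟩
  intro x
  rcases eq_or_ne x 0 with rfl | hx
  · simp [hf]
  · have hnx : 0 < ‖x‖ := norm_pos_iff.mpr hx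
    set u := ‖x‖⁻¹ • x with hu
    have humem : u ∈ Metric.sphere (0 : Fin n → ℝ) 1 := by
      rw [mem_sphere_zero_iff_norm, hu, norm_smul]
      simp [abs_of_pos (inv_pos.mpr hnx), inv_mul_cancel₀ hnx.ne']
    have h1 : f x₀ ≤ f u := hmin humem
    have h2 : f u = ‖x‖⁻¹ ^ 2 * f x := by
      rw [hf]
      simp only [hu, Matrix.mulVec_smul, dotProduct_smul, smul_dotProduct, smul_eq_mul]
      ring
    have h3 : ‖x‖ ^ 2 * f u = f x := by
      rw [h2, ← mul_assoc]
      field_simp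
    nlinarith [mul_le_mul_of_nonneg_left h1 (sq_nonneg ‖x‖)]

lemma rootBound {A : Matrix (Fin n) (Fin n) ℤ} (hsym : A.IsSymm) (hpos : PosDefInt A) :
    ∃ K : ℤ, ∀ x : Fin n → ℤ, x ⬝ᵥ (A *ᵥ x) = 2 → ∀ k, |x k| ≤ K := by
  rcases Nat.eq_zero_or_pos n with h0 | hn
  · exact ⟨0, fun x hx k => by subst h0; exact k.elim0⟩
  obtain ⟨c, hc, hcb⟩ := lowerBound hsym hpos hn
  refine ⟨⌈2 / c⌉, ?_⟩
  intro x hx k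
  set xr : Fin n → ℝ := fun i => ((x i : ℝ)) with hxr
  have hfx : xr ⬝ᵥ (A.map ((↑) : ℤ → ℝ) *ᵥ xr) = 2 := by
    have h := castQuad (Int.castRingHom ℝ) A x
    rw [hx] at h
    have h2 : xr ⬝ᵥ (A.map ((↑) : ℤ → ℝ) *ᵥ xr) = ((2:ℤ) : ℝ) := h.symm
    rw [h2]
    norm_num
  have h1 : c * ‖xr‖ ^ 2 ≤ 2 := by
    have := hcb xr
    rw [hfx] at this
    exact this
  have h2 : |(x k : ℝ)| ≤ ‖xr‖ := by
    have := norm_le_pi_norm xr k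
    simpa [hxr] using this
  have h3 : c * ((x k : ℝ)) ^ 2 ≤ 2 := by
    have hsq : ((x k : ℝ)) ^ 2 ≤ ‖xr‖ ^ 2 := by
      nlinarith [sq_abs ((x k : ℝ)), mul_self_le_mul_self (abs_nonneg ((x k : ℝ))) h2]
    nlinarith [mul_le_mul_of_nonneg_left hsq hc.le]
  have h4 : (((x k) ^ 2 : ℤ) : ℝ) ≤ ⌈2 / c⌉ := by
    have : ((x k : ℝ)) ^ 2 ≤ 2 / c := by
      rw [le_div_iff₀ hc]
      linarith [h3]
    push_cast
    exact this.trans (Int.le_ceil _)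
  have h5 : (x k) ^ 2 ≤ ⌈2 / c⌉ := by exact_mod_cast h4
  exact (intAbsLeSq (x k)).trans h5

lemma rootsFinite {A : Matrix (Fin n) (Fin n) ℤ} (hsym : A.IsSymm) (hpos : PosDefInt A) :
    {x : Fin n → ℤ | x ⬝ᵥ (A *ᵥ x) = 2}.Finite := by
  obtain ⟨K, hK⟩ := rootBound hsym hpos
  apply Set.Finite.subset (Set.Finite.pi (fun i : Fin n => Set.finite_Icc (-K) K))
  intro x hx
  intro i _
  exact Set.mem_Icc.mpr (abs_le.mp (hK x hx i))

open Polynomial in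
lemma genericRho {A : Matrix (Fin n) (Fin n) ℤ} (hsym : A.IsSymm) (hpos : PosDefInt A) :
    ∃ ρ : Fin n → ℤ, ∀ x : Fin n → ℤ, x ⬝ᵥ (A *ᵥ x) = 2 → ρ ⬝ᵥ x ≠ 0 := by
  classical
  have hfin := rootsFinite hsym hpos
  set Φ := hfin.toFinset with hΦ
  set P : ℤ[X] := ∏ α ∈ Φ, (∑ k : Fin n, C (α k) * X ^ (k : ℕ)) with hP
  have hfac : ∀ α ∈ Φ, (∑ k : Fin n, C (α k) * X ^ (k : ℕ)) ≠ 0 := by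
    intro α hα
    have hαroot : α ⬝ᵥ (A *ᵥ α) = 2 := by
      have := (Set.Finite.mem_toFinset hfin).mp hα
      exact this
    have hαne : α ≠ 0 := by
      intro h
      rw [h] at hαroot
      simp at hαroot
    obtain ⟨k₀, hk₀⟩ := Function.ne_iff.mp hαne
    intro hzero
    apply hk₀
    have hcoeff : (∑ k : Fin n, C (α k) * X ^ (k : ℕ)).coeff (k₀ : ℕ) = α k₀ := by
      rw [finset_sum_coeff]
      rw [Finset.sum_eq_single k₀]
      · simp
      · intro k _ hk
        rw [coeff_C_mul, coeff_X_pow, if_neg (by simpa [Fin.val_eq_val] using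
            (Fin.val_injective.ne_iff.mpr hk).symm)]
        ring
      · intro h
        exact absurd (Finset.mem_univ k₀) h
    rw [hzero] at hcoeff
    simpa using hcoeff.symm
  have hPne : P ≠ 0 := Finset.prod_ne_zero_iff.mpr hfac
  have hex : ∃ t : ℤ, P.eval t ≠ 0 := by
    by_contra hcon
    push_neg at hcon
    exact hPne (Polynomial.zero_of_eval_zero P hcon)
  obtain ⟨t, ht⟩ := hex
  refine ⟨fun k => t ^ (k : ℕ), ?_⟩
  intro x hx
  have hxΦ : x ∈ Φ := (Set.Finite.mem_toFinset hfin).mpr hx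
  have heval : P.eval t = ∏ α ∈ Φ, (∑ k : Fin n, α k * t ^ (k : ℕ)) := by
    rw [hP, eval_prod]
    apply Finset.prod_congr rfl
    intro α _
    rw [eval_finset_sum]
    apply Finset.sum_congr rfl
    intro k _
    simp
  rw [heval] at ht
  have hfacne : (∑ k : Fin n, x k * t ^ (k : ℕ)) ≠ 0 := by
    intro h
    exact ht (Finset.prod_eq_zero hxΦ h)
  intro h
  apply hfacne
  rw [← h]
  unfold dotProduct
  apply Finset.sum_congr rfl
  intro k _
  ring


lemma mulVecInj (W V : Matrix (Fin n) (Fin n) ℤ) (hVW : V * W = 1)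
    {x : Fin n → ℤ} (hx : x ≠ 0) : W *ᵥ x ≠ 0 := by
  intro h
  apply hx
  have h2 := congrArg (fun v => V *ᵥ v) h
  simpa [Matrix.mulVec_mulVec, hVW, Matrix.one_mulVec] using h2

lemma stdBasisMulVecSingle (i j l : Fin n) :
    Matrix.single i j (1:ℤ) *ᵥ Pi.single l 1 =
      if l = j then Pi.single i 1 else 0 := by
  rw [Matrix.mulVec_single]
  funext a
  simp only [Matrix.single, Matrix.col, Pi.smul_apply, Matrix.transpose_apply,
    MulOpposite.smul_eq_mul_unop, MulOpposite.unop_op, Matrix.of_apply, mul_one]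
  rw [apply_ite (fun f : Fin n → ℤ => f a)]
  simp only [Pi.single_apply, Pi.zero_apply]
  by_cases hl : l = j <;> by_cases ha : a = i <;>
    simp only [hl, ha, if_true, if_false] <;> split_ifs with h <;> simp_all

lemma finishLemma {A : Matrix (Fin n) (Fin n) ℤ} (hsym : A.IsSymm) (hpos : PosDefInt A)
    (W V : Matrix (Fin n) (Fin n) ℤ) (hWV : W * V = 1) (hVW : V * W = 1)
    (hroots : ∀ l, (W *ᵥ Pi.single l 1) ⬝ᵥ (A *ᵥ (W *ᵥ Pi.single l 1)) = 2)
    (hneg : ∀ i j, i ≠ j → (Wᵀ * A * W) i j ≤ 0) :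
    ∃ B : Matrix (Fin n) (Fin n) ℤ, B.IsSymm ∧ (∀ i, B i i = 2) ∧
      (∀ i j, i ≠ j → B i j = -1 ∨ B i j = 0) ∧ ZEquiv A B := by
  refine ⟨Wᵀ * A * W, ?_, ?_, ?_, W, V, hWV, hVW, rfl⟩
  · unfold Matrix.IsSymm
    rw [Matrix.transpose_mul, Matrix.transpose_mul, Matrix.transpose_transpose, hsym.eq,
      Matrix.mul_assoc]
  · intro i
    rw [conjEntry]
    exact hroots i
  · intro i j hij
    have hle := hneg i j hij
    have hx : (Pi.single i 1 : Fin n → ℤ) + (Pi.single j 1 : Fin n → ℤ) ≠ 0 := by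
      intro h
      have h2 := congrFun h i
      rw [Pi.add_apply, Pi.single_eq_same, Pi.single_eq_of_ne hij] at h2
      norm_num at h2
    have hq := hpos _ (mulVecInj W V hVW hx)
    rw [Matrix.mulVec_add, qAdd hsym, hroots i, hroots j, ← conjEntry] at hq
    omega

lemma recMain {A : Matrix (Fin n) (Fin n) ℤ} (hsym : A.IsSymm) (hpos : PosDefInt A)
    (ρ : Fin n → ℤ) (hρ : ∀ x : Fin n → ℤ, x ⬝ᵥ (A *ᵥ x) = 2 → ρ ⬝ᵥ x ≠ 0) :
    ∀ (m : ℕ) (W V : Matrix (Fin n) (Fin n) ℤ), W * V = 1 → V * W = 1 →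
      (∀ l, (W *ᵥ Pi.single l 1) ⬝ᵥ (A *ᵥ (W *ᵥ Pi.single l 1)) = 2) →
      (∀ l, 0 < ρ ⬝ᵥ (W *ᵥ Pi.single l 1)) →
      ((∑ l, ρ ⬝ᵥ (W *ᵥ Pi.single l 1)) ≤ (m : ℤ)) →
      ∃ B : Matrix (Fin n) (Fin n) ℤ, B.IsSymm ∧ (∀ i, B i i = 2) ∧
        (∀ i j, i ≠ j → B i j = -1 ∨ B i j = 0) ∧ ZEquiv A B := by
  intro m
  induction m with
  | zero =>
    intro W V hWV hVW hroots hpo hsum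
    by_cases hall : ∀ i j, i ≠ j → (Wᵀ * A * W) i j ≤ 0
    · exact finishLemma hsym hpos W V hWV hVW hroots hall
    · exfalso
      push_neg at hall
      obtain ⟨i, j, hij, hgt⟩ := hall
      have h1 : (1:ℤ) ≤ ρ ⬝ᵥ (W *ᵥ Pi.single j 1) := hpo j
      have h2 : ρ ⬝ᵥ (W *ᵥ Pi.single j 1) ≤ ∑ l, ρ ⬝ᵥ (W *ᵥ Pi.single l 1) :=
        Finset.single_le_sum (fun l _ => (hpo l).le) (Finset.mem_univ j)
      simp only [Nat.cast_zero] at hsum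
      linarith
  | succ m IH =>
    intro W V hWV hVW hroots hpo hsum
    by_cases hall : ∀ i j, i ≠ j → (Wᵀ * A * W) i j ≤ 0
    · exact finishLemma hsym hpos W V hWV hVW hroots hall
    push_neg at hall
    obtain ⟨i, j, hij, hgt⟩ := hall
    have step : ∀ i j : Fin n, i ≠ j → (Wᵀ * A * W) i j = 1 →
        ρ ⬝ᵥ (W *ᵥ Pi.single i 1) < ρ ⬝ᵥ (W *ᵥ Pi.single j 1) →
        ∃ B : Matrix (Fin n) (Fin n) ℤ, B.IsSymm ∧ (∀ i, B i i = 2) ∧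
          (∀ i j, i ≠ j → B i j = -1 ∨ B i j = 0) ∧ ZEquiv A B := by
      clear hij hgt i j
      intro i j hij hBij hlt
      set T : Matrix (Fin n) (Fin n) ℤ := 1 - Matrix.single i j 1 with hT
      set T' : Matrix (Fin n) (Fin n) ℤ := 1 + Matrix.single i j 1 with hT'
      have hSS : Matrix.single i j (1:ℤ) * Matrix.single i j 1 = 0 :=
        Matrix.single_mul_single_of_ne (c := 1) i j i (Ne.symm hij) 1
      have hTT' : T * T' = 1 := by
        rw [hT, hT', sub_mul, one_mul, mul_add, mul_one, hSS]
        abel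
      have hT'T : T' * T = 1 := by
        rw [hT, hT', add_mul, one_mul, mul_sub, mul_one, hSS]
        abel
      have hcol : ∀ l, (W * T) *ᵥ Pi.single l 1 =
          if l = j then W *ᵥ Pi.single j 1 - W *ᵥ Pi.single i 1 else W *ᵥ Pi.single l 1 := by
        intro l
        rw [← Matrix.mulVec_mulVec]
        have hTs : T *ᵥ Pi.single l 1 =
            Pi.single l 1 - (if l = j then (Pi.single i 1 : Fin n → ℤ) else 0) := by
          rw [hT, Matrix.sub_mulVec, Matrix.one_mulVec, stdBasisMulVecSingle]
        rw [hTs]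
        rcases eq_or_ne l j with rfl | hl
        · rw [if_pos rfl, if_pos rfl, Matrix.mulVec_sub]
        · rw [if_neg hl, if_neg hl, sub_zero]
      have hBji : (Wᵀ * A * W) j i = 1 := by
        rw [conjEntry, bilSymm hsym, ← conjEntry, hBij]
      have hrootdiff : (W *ᵥ Pi.single j 1 - W *ᵥ Pi.single i 1) ⬝ᵥ
          (A *ᵥ (W *ᵥ Pi.single j 1 - W *ᵥ Pi.single i 1)) = 2 := by
        rw [qSub hsym, hroots j, hroots i, ← conjEntry, hBji]
        ring
      apply IH (W * T) (T' * V)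
      · rw [Matrix.mul_assoc, ← Matrix.mul_assoc T T' V, hTT', Matrix.one_mul, hWV]
      · rw [Matrix.mul_assoc, ← Matrix.mul_assoc V W T, hVW, Matrix.one_mul, hT'T]
      · intro l
        rw [hcol l]
        rcases eq_or_ne l j with rfl | hl
        · rw [if_pos rfl]
          exact hrootdiff
        · rw [if_neg hl]
          exact hroots l
      · intro l
        rw [hcol l]
        rcases eq_or_ne l j with rfl | hl
        · rw [if_pos rfl, dotProduct_sub]
          omega
        · rw [if_neg hl]
          exact hpo l
      · have hterm : ∀ l, ρ ⬝ᵥ ((W * T) *ᵥ Pi.single l 1) =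
            ρ ⬝ᵥ (W *ᵥ Pi.single l 1) - (if l = j then ρ ⬝ᵥ (W *ᵥ Pi.single i 1) else 0) := by
          intro l
          rw [hcol l]
          rcases eq_or_ne l j with rfl | hl
          · rw [if_pos rfl, if_pos rfl, dotProduct_sub]
          · rw [if_neg hl, if_neg hl, sub_zero]
        calc (∑ l, ρ ⬝ᵥ ((W * T) *ᵥ Pi.single l 1))
            = (∑ l, (ρ ⬝ᵥ (W *ᵥ Pi.single l 1) -
                (if l = j then ρ ⬝ᵥ (W *ᵥ Pi.single i 1) else 0))) :=
              Finset.sum_congr rfl (fun l _ => hterm l)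
          _ = (∑ l, ρ ⬝ᵥ (W *ᵥ Pi.single l 1)) -
                (∑ l, (if l = j then ρ ⬝ᵥ (W *ᵥ Pi.single i 1) else 0)) :=
              Finset.sum_sub_distrib _ _
          _ = (∑ l, ρ ⬝ᵥ (W *ᵥ Pi.single l 1)) - ρ ⬝ᵥ (W *ᵥ Pi.single i 1) := by
              rw [Finset.sum_ite_eq' Finset.univ j
                (fun _ => ρ ⬝ᵥ (W *ᵥ Pi.single i 1)), if_pos (Finset.mem_univ j)]
          _ ≤ (m : ℤ) := by
              have h1 : (1:ℤ) ≤ ρ ⬝ᵥ (W *ᵥ Pi.single i 1) := hpo i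
              push_cast at hsum ⊢
              linarith
    have hBij : (Wᵀ * A * W) i j = 1 := by
      have hx : (Pi.single i 1 : Fin n → ℤ) - (Pi.single j 1 : Fin n → ℤ) ≠ 0 := by
        intro h
        have h2 := congrFun h i
        rw [Pi.sub_apply, Pi.single_eq_same, Pi.single_eq_of_ne hij] at h2
        norm_num at h2
      have hq := hpos _ (mulVecInj W V hVW hx)
      rw [Matrix.mulVec_sub, qSub hsym, hroots i, hroots j, ← conjEntry] at hq
      omega
    have hBji : (Wᵀ * A * W) j i = 1 := by
      rw [conjEntry, bilSymm hsym, ← conjEntry, hBij]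
    have hrootdiff : (W *ᵥ Pi.single j 1 - W *ᵥ Pi.single i 1) ⬝ᵥ
        (A *ᵥ (W *ᵥ Pi.single j 1 - W *ᵥ Pi.single i 1)) = 2 := by
      rw [qSub hsym, hroots j, hroots i, ← conjEntry, hBji]
      ring
    have hne' : ρ ⬝ᵥ (W *ᵥ Pi.single j 1) ≠ ρ ⬝ᵥ (W *ᵥ Pi.single i 1) := by
      intro h
      apply hρ _ hrootdiff
      rw [dotProduct_sub, h, sub_self]
    rcases lt_or_gt_of_ne hne' with hlt | hlt
    · exact step j i hij.symm hBji hlt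
    · exact step i j hij hBij hlt

theorem stmt7aux (A : Matrix (Fin n) (Fin n) ℤ)
    (hsym : A.IsSymm) (hdiag : ∀ i, A i i = 2) (hpos : PosDefInt A) :
    ∃ B : Matrix (Fin n) (Fin n) ℤ, B.IsSymm ∧ (∀ i, B i i = 2) ∧
      (∀ i j, i ≠ j → B i j = -1 ∨ B i j = 0) ∧ ZEquiv A B := by
  classical
  obtain ⟨ρ, hρ⟩ := genericRho hsym hpos
  have hρj : ∀ j, ρ j ≠ 0 := by
    intro j
    have hroot : (Pi.single j 1 : Fin n → ℤ) ⬝ᵥ (A *ᵥ (Pi.single j 1 : Fin n → ℤ)) = 2 := by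
      rw [single_dotProduct, Matrix.mulVec_single]
      simp [hdiag j]
    have h1 := hρ _ hroot
    rwa [dotProduct_single, mul_one] at h1
  set d : Fin n → ℤ := fun j => if 0 < ρ j then 1 else -1 with hd
  have hdl : ∀ l, d l * d l = 1 := by
    intro l
    rw [hd]
    by_cases h : 0 < ρ l <;> simp [h]
  set W := Matrix.diagonal d with hW
  have hWW : W * W = 1 := by
    rw [hW, Matrix.diagonal_mul_diagonal]
    rw [show (fun i => d i * d i) = fun _ => (1:ℤ) from funext hdl, Matrix.diagonal_one]
  have hcolW : ∀ j, W *ᵥ Pi.single j 1 = Pi.single j (d j) := by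
    intro j
    funext a
    rw [Matrix.mulVec_single_one, Matrix.col, Matrix.transpose_apply]
    rcases eq_or_ne a j with rfl | h
    · rw [hW, Matrix.diagonal_apply_eq, Pi.single_eq_same]
    · rw [hW, Matrix.diagonal_apply_ne _ h, Pi.single_eq_of_ne h]
  have hroots : ∀ l, (W *ᵥ Pi.single l 1) ⬝ᵥ (A *ᵥ (W *ᵥ Pi.single l 1)) = 2 := by
    intro l
    rw [hcolW l, single_dotProduct, Matrix.mulVec_single]
    calc d l * ((fun i => A i l * d l) l) = (d l * d l) * A l l := by ring
      _ = 2 := by rw [hdl l, hdiag l, one_mul]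
  have hpo : ∀ l, 0 < ρ ⬝ᵥ (W *ᵥ Pi.single l 1) := by
    intro l
    rw [hcolW l, dotProduct_single]
    have h1 := hρj l
    simp only [hd]
    split_ifs with h <;> omega
  exact recMain hsym hpos ρ hρ (∑ l, ρ ⬝ᵥ (W *ᵥ Pi.single l 1)).toNat W W hWW hWW hroots hpo
    (Int.self_le_toNat _)

theorem stmt7 (n : ℕ) (A : Matrix (Fin n) (Fin n) ℤ)
    (hsym : A.IsSymm) (hdiag : ∀ i, A i i = 2) (hpos : PosDefInt A) :
    ∃ B : Matrix (Fin n) (Fin n) ℤ, B.IsSymm ∧ (∀ i, B i i = 2) ∧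
      (∀ i j, i ≠ j → B i j = -1 ∨ B i j = 0) ∧ ZEquiv A B :=
  stmt7aux A hsym hdiag hpos
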